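/- In the general-operator setting with single-source initialization, message passing only touches nodes reachable from the head of the target link: for every k ≥ 0 and every node z that is not reachable from v in T, h^k_z = 0. -/

import Mathlib

/-- `ReachableFrom T v z` means `z = v` or there is a nonempty sequence of triples of `T`,
chained head-to-tail, whose first triple has tail `v` and whose last triple has head `z`. -/
def ReachableFrom {V R : Type*} (T : Finset (V × R × V)) (v z : V) : Prop :=
  z = v ∨ ∃ (l : List (V × R × V)) (hne : l ≠ []),
    (∀ t ∈ l, t ∈ T) ∧ l.Chain' (fun a b => a.2.2 = b.1) ∧
    (l.head hne).1 = v ∧ (l.getLast hne).2.2 = z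

lemma reachable_step {V R : Type*} (T : Finset (V × R × V)) (v : V)
    (t : V × R × V) (ht : t ∈ T) (hx : ReachableFrom T v t.1) :
    ReachableFrom T v t.2.2 := by
  rcases hx with hx | ⟨l, hne, hmem, hch, hhead, hlast⟩
  · right
    refine ⟨[t], by simp, by simpa using ht, List.isChain_singleton _, by simp [hx], by simp⟩
  · right
    refine ⟨l ++ [t], by simp, ?_, ?_, ?_, ?_⟩
    · intro s hs
      rcases List.mem_append.1 hs with hs | hs
      · exact hmem s hs
      · simp at hs; exact hs ▸ ht
    · refine List.IsChain.append hch (List.isChain_singleton _) ?_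
      intro a ha b hb
      simp [List.getLast?_eq_getLast hne] at ha hb
      rw [← ha, ← hb]
      exact hlast
    · rw [List.head_append_of_ne_nil hne]
      exact hhead
    · simp

lemma fold_zero {α β : Type*} (op : β → β → β) [hc : Std.Commutative op]
    [ha : Std.Associative op] (z : β) (hz : op z z = z)
    (s : Finset α) (f : α → β) (hf : ∀ t ∈ s, f t = z) :
    Finset.fold op z f s = z := by
  classical
  induction s using Finset.induction_on with
  | empty => simp
  | @insert a s hx ih =>
    rw [Finset.fold_insert hx, hf a (Finset.mem_insert_self a s),
      ih (fun t ht => hf t (Finset.mem_insert_of_mem ht)), hz]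

/-- In the general-operator setting with single-source initialization, message passing
only touches nodes reachable from the head `v` of the target link: for every `k ≥ 0` and
every node `z` not reachable from `v` in `T`, `h^k_z = 0`. -/
theorem node_feature_zero_off_reachable_set_general_ops
    {V R : Type*} [Fintype V] [Fintype R] [DecidableEq V] [DecidableEq R]
    (T : Finset (V × R × V)) (d : ℕ) (hd : 1 ≤ d) (r : R → Fin d → ℝ)
    (op otimes : (Fin d → ℝ) → (Fin d → ℝ) → (Fin d → ℝ))
    (hcomm : Std.Commutative op) (hassoc : Std.Associative op)
    (hid : ∀ a : Fin d → ℝ, op 0 a = a)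
    (hzero : ∀ a : Fin d → ℝ, otimes 0 a = 0)
    (u v : V) (rt : R) (hT : (u, rt, v) ∈ T) (huv : u ≠ v)
    (h : ℕ → V → Fin d → ℝ) (e : ℕ → V × R × V → Fin d → ℝ)
    (hh0 : ∀ z : V, h 0 z = 0)
    (he0 : ∀ t : V × R × V, e 0 t = if t = (u, rt, v) then r rt else 0)
    (hh : ∀ k : ℕ, 1 ≤ k → ∀ z : V,
      h k z = @Finset.fold _ _ op hcomm hassoc 0
        (fun t => op (otimes (h (k - 1) t.1) (r t.2.1)) (otimes (e (k - 1) t) (r t.2.1)))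
        (T.filter (fun t => t.2.2 = z)))
    (he : ∀ k : ℕ, 1 ≤ k → ∀ t ∈ T, e k t = op (h k t.1) (e (k - 1) t)) :
    ∀ (k : ℕ) (z : V), ¬ ReachableFrom T v z → h k z = 0 := by
  have key : ∀ k : ℕ, (∀ z : V, ¬ ReachableFrom T v z → h k z = 0) ∧
      (∀ t ∈ T, ¬ ReachableFrom T v t.2.2 → e k t = 0) := by
    intro k
    induction k with
    | zero =>
      constructor
      · intro z _; exact hh0 z
      · intro t ht hnr
        rw [he0]
        split
        · rename_i heq
          exfalso
          apply hnr
          rw [heq]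
          exact Or.inl rfl
        · rfl
    | succ n ih =>
      have hstep : ∀ z : V, ¬ ReachableFrom T v z → h (n + 1) z = 0 := by
        intro z hnr
        rw [hh (n + 1) (Nat.le_add_left 1 n) z]
        simp only [Nat.add_sub_cancel]
        refine fold_zero op 0 (hid 0) _ _ ?_
        intro t ht
        rw [Finset.mem_filter] at ht
        obtain ⟨htT, htz⟩ := ht
        have hnr1 : ¬ ReachableFrom T v t.1 := fun hr =>
          hnr (htz ▸ reachable_step T v t htT hr)
        rw [ih.1 t.1 hnr1, ih.2 t htT (htz ▸ hnr), hzero]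
        exact hid 0
      constructor
      · exact hstep
      · intro t ht hnr
        have hnr1 : ¬ ReachableFrom T v t.1 := fun hr =>
          hnr (reachable_step T v t ht hr)
        rw [he (n + 1) (Nat.le_add_left 1 n) t ht, hstep t.1 hnr1,
          Nat.add_sub_cancel, ih.2 t ht hnr, hid]
  intro k z hz
  exact (key k).1 z hz
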